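/- Let 0 < γ < β ≤ 1 and φ(x) = (1+β-γ-βx)x. Then the derivative of the k-th iterate, (φ^(k))'(x) = ∏_{i=0}^{k-1} φ'(φ^(i)(x)), converges to 0 as k → ∞ for every x ∈ (0,1]. -/

import Mathlib

theorem infection_fraction_iterate_deriv_tendsto_zero
    (β γ : ℝ) (hγ : 0 < γ) (hγβ : γ < β) (hβ : β ≤ 1)
    (φ : ℝ → ℝ) (hφ : ∀ x, φ x = (1 + β - γ - β * x) * x) :
    ∀ x ∈ Set.Ioc (0:ℝ) 1,
      (∀ k : ℕ, deriv (φ^[k]) x = ∏ i ∈ Finset.range k, deriv φ (φ^[i] x)) ∧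
      Filter.Tendsto (fun k => ∏ i ∈ Finset.range k, deriv φ (φ^[i] x))
        Filter.atTop (nhds 0) := by
  intro x hx
  obtain ⟨hx0, hx1⟩ := hx
  have hβ0 : (0:ℝ) < β := hγ.trans hγβ
  set xs : ℝ := 1 - γ / β with hxsdef
  have hβxs : β * xs = β - γ := by
    rw [hxsdef, mul_sub, mul_one, mul_div_assoc', mul_div_cancel_left₀ γ hβ0.ne']
  have hxs0 : 0 < xs := by
    have h1 : γ / β < 1 := (div_lt_one hβ0).mpr hγβ
    simp only [hxsdef]; linarith
  have hxs1 : xs < 1 := by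
    have h1 : 0 < γ / β := div_pos hγ hβ0
    simp only [hxsdef]; linarith
  -- derivative of φ
  have hder : ∀ y : ℝ, HasDerivAt φ (1 + β - γ - 2 * β * y) y := by
    intro y
    have h0 : HasDerivAt (fun y : ℝ => (1 + β - γ - β * y) * y)
        ((-(β * 1)) * y + (1 + β - γ - β * y) * 1) y :=
      (((hasDerivAt_id y).const_mul β).const_sub (1 + β - γ)).mul (hasDerivAt_id y)
    have h1 : HasDerivAt (fun y : ℝ => (1 + β - γ - β * y) * y)
        (1 + β - γ - 2 * β * y) y := by
      convert h0 using 1; ring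
    have hfe : φ = fun y : ℝ => (1 + β - γ - β * y) * y := funext hφ
    rw [hfe]; exact h1
  have hderiv : ∀ y : ℝ, deriv φ y = 1 + β - γ - 2 * β * y := fun y => (hder y).deriv
  have hdiff : ∀ y : ℝ, DifferentiableAt ℝ φ y := fun y => (hder y).differentiableAt
  -- invariance of (0,1]
  have hmem : ∀ y : ℝ, y ∈ Set.Ioc (0:ℝ) 1 → φ y ∈ Set.Ioc (0:ℝ) 1 := by
    intro y ⟨hy0, hy1⟩
    constructor
    · rw [hφ]
      have h1 : β * y ≤ β * 1 := mul_le_mul_of_nonneg_left hy1 hβ0.le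
      have h2 : 0 < 1 + β - γ - β * y := by linarith
      exact mul_pos h2 hy0
    · have key : 1 - φ y = (1 - y) * (1 - β * y) + γ * y := by rw [hφ]; ring
      nlinarith [mul_nonneg (sub_nonneg.mpr hy1)
        (by nlinarith : (0:ℝ) ≤ 1 - β * y), mul_nonneg hγ.le hy0.le]
  -- contraction identity
  have hcontr : ∀ y : ℝ, φ y - xs = (y - xs) * (1 - β * y) := by
    intro y; rw [hφ]; field_simp [hxsdef]; linear_combination (-y) * hβxs
  -- lower bound
  have hlow : ∀ y : ℝ, y ∈ Set.Ioc (0:ℝ) 1 → min y xs ≤ φ y := by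
    intro y ⟨hy0, hy1⟩
    rcases le_total y xs with h | h
    · have : φ y - y = β * y * (xs - y) := by
        rw [hφ]; field_simp [hxsdef]; linear_combination -hβxs
      have h2 : 0 ≤ φ y - y := by
        have := mul_nonneg (mul_pos hβ0 hy0).le (sub_nonneg.mpr h)
        linarith
      calc min y xs ≤ y := min_le_left _ _
        _ ≤ φ y := by linarith
    · have h2 : 0 ≤ φ y - xs := by
        rw [hcontr y]
        have h1 : β * y ≤ β * 1 := mul_le_mul_of_nonneg_left hy1 hβ0.le
        exact mul_nonneg (sub_nonneg.mpr h) (by linarith)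
      calc min y xs ≤ xs := min_le_right _ _
        _ ≤ φ y := by linarith
  set m : ℝ := min x xs with hmdef
  have hm0 : 0 < m := lt_min hx0 hxs0
  have hmxs : m ≤ xs := min_le_right _ _
  set r : ℝ := 1 - β * m with hrdef
  have hr0 : 0 ≤ r := by
    have : β * m ≤ 1 * 1 := by
      apply mul_le_mul hβ ((min_le_left _ _).trans hx1) hm0.le zero_le_one
    simp only [hrdef]; linarith
  have hr1 : r < 1 := by
    have : 0 < β * m := mul_pos hβ0 hm0
    simp only [hrdef]; linarith
  -- orbit properties
  have horb : ∀ k : ℕ, φ^[k] x ∈ Set.Ioc (0:ℝ) 1 ∧ m ≤ φ^[k] x ∧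
      |φ^[k] x - xs| ≤ r ^ k * |x - xs| := by
    intro k
    induction k with
    | zero =>
      simp only [Function.iterate_zero_apply, pow_zero, one_mul]
      exact ⟨⟨hx0, hx1⟩, min_le_left _ _, le_refl _⟩
    | succ k ih =>
      obtain ⟨hky, hkm, hkc⟩ := ih
      rw [Function.iterate_succ_apply']
      set y := φ^[k] x
      refine ⟨hmem y hky, ?_, ?_⟩
      · calc m ≤ min y xs := le_min hkm hmxs
          _ ≤ φ y := hlow y hky
      · have hby : 1 - β * y ≤ r := by
          simp only [hrdef]
          have : β * m ≤ β * y := mul_le_mul_of_nonneg_left hkm hβ0.le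
          linarith
        have hby0 : 0 ≤ 1 - β * y := by
          have : β * y ≤ 1 * 1 := mul_le_mul hβ hky.2 hky.1.le zero_le_one
          linarith
        have : |φ y - xs| = |y - xs| * (1 - β * y) := by
          rw [hcontr y, abs_mul, abs_of_nonneg hby0]
        rw [this, pow_succ]
        calc |y - xs| * (1 - β * y) ≤ (r ^ k * |x - xs|) * r :=
              mul_le_mul hkc hby hby0 (by positivity)
          _ = r ^ k * r * |x - xs| := by ring
  -- derivative of iterates
  have hditer : ∀ k : ℕ, DifferentiableAt ℝ (φ^[k]) x ∧
      deriv (φ^[k]) x = ∏ i ∈ Finset.range k, deriv φ (φ^[i] x) := by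
    intro k
    induction k with
    | zero => simp
    | succ k ih =>
      obtain ⟨ihd, ihe⟩ := ih
      have hcomp : φ^[k + 1] = φ ∘ φ^[k] := Function.iterate_succ' φ k
      constructor
      · rw [hcomp]; exact (hdiff _).comp x ihd
      · rw [hcomp, deriv_comp x (hdiff _) ihd, ihe, Finset.prod_range_succ]
        ring
  refine ⟨fun k => (hditer k).2, ?_⟩
  -- derivative bound along the orbit
  set q : ℝ := 1 - β + γ with hqdef
  have hq0 : 0 < q := by simp only [hqdef]; linarith
  have hq1 : q < 1 := by simp only [hqdef]; linarith
  set c : ℝ := (1 + q) / 2 with hcdef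
  have hc0 : 0 < c := by simp only [hcdef]; linarith
  have hc1 : c < 1 := by simp only [hcdef]; linarith
  have hdbound : ∀ i : ℕ, |deriv φ (φ^[i] x)| ≤ q + 2 * β * (r ^ i * |x - xs|) := by
    intro i
    rw [hderiv]
    have hid : 1 + β - γ - 2 * β * (φ^[i] x) = q + 2 * β * (xs - φ^[i] x) := by
      have := hβxs; simp only [hqdef]; nlinarith [hβxs]
    rw [hid]
    calc |q + 2 * β * (xs - φ^[i] x)| ≤ |q| + |2 * β * (xs - φ^[i] x)| := abs_add_le _ _
      _ = q + 2 * β * |φ^[i] x - xs| := by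
          rw [abs_of_pos hq0, abs_mul, abs_of_pos (by linarith : (0:ℝ) < 2 * β),
            abs_sub_comm]
      _ ≤ q + 2 * β * (r ^ i * |x - xs|) := by
          have := (horb i).2.2
          nlinarith
  -- choose N so that tail derivatives are ≤ c
  have hKpos : 0 < 2 * β * (|x - xs| + 1) := by positivity
  obtain ⟨N, hN⟩ := exists_pow_lt_of_lt_one
    (div_pos (by linarith : (0:ℝ) < (1 - q) / 2) hKpos) hr1
  have htail : ∀ i : ℕ, N ≤ i → |deriv φ (φ^[i] x)| ≤ c := by
    intro i hi
    have h1 : r ^ i ≤ r ^ N := pow_le_pow_of_le_one hr0 hr1.le hi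
    have h2 : 2 * β * (r ^ i * |x - xs|) ≤ 2 * β * (|x - xs| + 1) * r ^ N := by
      have habs : (0:ℝ) ≤ |x - xs| := abs_nonneg _
      nlinarith [pow_nonneg hr0 i, pow_nonneg hr0 N]
    have h3 : 2 * β * (|x - xs| + 1) * r ^ N < (1 - q) / 2 := by
      have h := hN
      rw [lt_div_iff₀ hKpos] at h
      linarith [h]
    calc |deriv φ (φ^[i] x)| ≤ q + 2 * β * (r ^ i * |x - xs|) := hdbound i
      _ ≤ q + 2 * β * (|x - xs| + 1) * r ^ N := by linarith
      _ ≤ q + (1 - q) / 2 := by linarith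
      _ = c := by simp only [hcdef]; ring
  -- product bound
  set P : ℕ → ℝ := fun k => ∏ i ∈ Finset.range k, deriv φ (φ^[i] x) with hPdef
  have hPsucc : ∀ k : ℕ, P (k + 1) = P k * deriv φ (φ^[k] x) := by
    intro k; simp only [hPdef, Finset.prod_range_succ]
  have hprodb : ∀ k : ℕ, N ≤ k → |P k| ≤ |P N| * c ^ (k - N) := by
    intro k hk
    induction k, hk using Nat.le_induction with
    | base => simp
    | succ k hk ih =>
      have hstep : |P (k + 1)| = |P k| * |deriv φ (φ^[k] x)| := by
        rw [hPsucc k, abs_mul]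
      rw [hstep]
      have h1 : |P k| * |deriv φ (φ^[k] x)| ≤ (|P N| * c ^ (k - N)) * c :=
        mul_le_mul ih (htail k hk) (abs_nonneg _) (by positivity)
      have h2 : (|P N| * c ^ (k - N)) * c = |P N| * c ^ (k + 1 - N) := by
        rw [Nat.succ_sub hk, pow_succ]; ring
      linarith [h1, h2.le.trans (le_refl _)]
  -- conclude
  have hg0 : Filter.Tendsto (fun k : ℕ => |P N| * c ^ (k - N)) Filter.atTop (nhds 0) := by
    have h1 : Filter.Tendsto (fun n : ℕ => c ^ n) Filter.atTop (nhds 0) :=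
      tendsto_pow_atTop_nhds_zero_of_lt_one hc0.le hc1
    have h2 : Filter.Tendsto (fun k : ℕ => k - N) Filter.atTop Filter.atTop :=
      Filter.tendsto_sub_atTop_nat N
    have h3 := (h1.comp h2).const_mul |P N|
    simpa only [Function.comp, mul_zero] using h3
  have habs : Filter.Tendsto (fun k : ℕ => |P k|) Filter.atTop (nhds 0) := by
    apply squeeze_zero' (Filter.Eventually.of_forall fun k => abs_nonneg _) _ hg0
    filter_upwards [Filter.eventually_ge_atTop N] with k hk
    exact hprodb k hk
  exact (tendsto_zero_iff_abs_tendsto_zero P).mpr habs
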